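/- Let c ∈ ℝ^{N×M} be a cost matrix. Consider the optimal transport value W(π) = min { ∑_{i=1}^N ∑_{m=1}^M a_{im} c_{im} : A ∈ ℝ_{≥0}^{N×M}, ∑_{m=1}^M a_{im} = 1/N for all i, ∑_{i=1}^N a_{im} = π_m for all m } for π in the probability simplex Δ_{M−1}. Then the minimum of W(π) over π ∈ Δ_{M−1} equals (1/N)·∑_{i=1}^N min_{1≤m≤M} c_{im}, and it is attained by the matrix whose i-th row is the scaled one-hot vector (1/N)·𝟙_{m_i}, where m_i is any index minimizing c_{im} over m. (This justifies that, when the mixing proportion π is jointly optimized, minimizing the class-aware OT distance matches each sample to its lowest-cost source class-conditional distribution, with the rows of the optimal transportation matrix being scaled one-hot vectors.) -/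
import Mathlib


open Finset

theorem aux_ciInf_eq {M : ℕ} (hM : 1 ≤ M) (g : Fin M → ℝ) (m0 : Fin M)
    (h : ∀ m, g m0 ≤ g m) : (⨅ m, g m) = g m0 := by
  haveI : Nonempty (Fin M) := ⟨m0⟩
  exact le_antisymm (ciInf_le (Set.Finite.bddBelow (Set.finite_range g)) m0) (le_ciInf h)

theorem aux_second (N M : ℕ) (hN : 1 ≤ N) (hM : 1 ≤ M) (c : Fin N → Fin M → ℝ)
    (f : Fin N → Fin M) (hf : ∀ i m, c i (f i) ≤ c i m) :
    ((fun m => ∑ i, (if m = f i then (1 / (N : ℝ)) else 0)) ∈ stdSimplex ℝ (Fin M) ∧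
      ∑ i, ∑ m, (if m = f i then (1 / (N : ℝ)) else 0) * c i m
        = (1 / (N : ℝ)) * ∑ i, ⨅ m, c i m) := by
  have hNpos : (0:ℝ) < N := by exact_mod_cast hN
  constructor
  · constructor
    · intro m
      apply Finset.sum_nonneg
      intro i _
      split <;> positivity
    · rw [Finset.sum_comm]
      have : ∀ i : Fin N, ∑ m, (if m = f i then (1 / (N : ℝ)) else 0) = 1 / N := by
        intro i; simp
      rw [Finset.sum_congr rfl (fun i _ => this i)]
      simp
      field_simp
  · have : ∀ i : Fin N, ∑ m, (if m = f i then (1 / (N : ℝ)) else 0) * c i m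
        = (1 / (N : ℝ)) * (⨅ m, c i m) := by
      intro i
      rw [aux_ciInf_eq hM (c i) (f i) (hf i)]
      rw [Finset.sum_eq_single (f i)]
      · simp
      · intro b _ hb; simp [hb]
      · intro h; exact absurd (Finset.mem_univ _) h
    rw [Finset.sum_congr rfl (fun i _ => this i), Finset.mul_sum]

/-- When the mixing proportion `π` is jointly optimized over the simplex, the
class-aware OT value `min_π W(π)` equals `(1/N) ∑ i min_m c i m`, and it is attained
by the matrix whose `i`-th row is the scaled one-hot vector `(1/N) 𝟙_{f i}` for any
selection `f` of per-row minimizers of the cost. -/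
theorem ot_min_over_mixing_eq_rowmin
    (N M : ℕ) (hN : 1 ≤ N) (hM : 1 ≤ M) (c : Fin N → Fin M → ℝ) :
    IsLeast { s : ℝ | ∃ π : Fin M → ℝ, π ∈ stdSimplex ℝ (Fin M) ∧
        ∃ a : Fin N → Fin M → ℝ,
          (∀ i m, 0 ≤ a i m) ∧ (∀ i, ∑ m, a i m = 1 / (N : ℝ)) ∧
          (∀ m, ∑ i, a i m = π m) ∧
          s = ∑ i, ∑ m, a i m * c i m }
      ((1 / (N : ℝ)) * ∑ i, ⨅ m, c i m) ∧
    ∀ f : Fin N → Fin M, (∀ i m, c i (f i) ≤ c i m) →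
      ((fun m => ∑ i, (if m = f i then (1 / (N : ℝ)) else 0)) ∈ stdSimplex ℝ (Fin M) ∧
        ∑ i, ∑ m, (if m = f i then (1 / (N : ℝ)) else 0) * c i m
          = (1 / (N : ℝ)) * ∑ i, ⨅ m, c i m) := by
  haveI : NeZero M := ⟨(by omega : M ≠ 0)⟩
  have hNpos : (0:ℝ) < N := by exact_mod_cast hN
  -- choose a minimizer in each row
  have hmin : ∀ i : Fin N, ∃ m0 : Fin M, ∀ m, c i m0 ≤ c i m := by
    intro i
    obtain ⟨m0, _, h⟩ := Finset.exists_min_image Finset.univ (c i) ⟨⟨0, hM⟩, Finset.mem_univ _⟩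
    exact ⟨m0, fun m => h m (Finset.mem_univ m)⟩
  choose f hf using hmin
  constructor
  · constructor
    · obtain ⟨hπ, hval⟩ := aux_second N M hN hM c f hf
      exact ⟨_, hπ, fun i m => (if m = f i then (1 / (N : ℝ)) else 0), by
        intro i m; dsimp only; split <;> positivity, by intro i; simp, fun m => rfl, hval.symm⟩
    · rintro s ⟨π, hπ, a, ha0, har, hac, rfl⟩
      have key : ∀ i : Fin N, (1 / (N : ℝ)) * (⨅ m, c i m) ≤ ∑ m, a i m * c i m := by
        intro i
        rw [aux_ciInf_eq hM (c i) (f i) (hf i)]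
        calc (1 / (N : ℝ)) * c i (f i) = ∑ m, a i m * c i (f i) := by
              rw [← Finset.sum_mul, har i]
          _ ≤ ∑ m, a i m * c i m :=
              Finset.sum_le_sum fun m _ => mul_le_mul_of_nonneg_left (hf i m) (ha0 i m)
      calc (1 / (N : ℝ)) * ∑ i, ⨅ m, c i m
          = ∑ i, (1 / (N : ℝ)) * (⨅ m, c i m) := by rw [Finset.mul_sum]
        _ ≤ ∑ i, ∑ m, a i m * c i m := Finset.sum_le_sum fun i _ => key i
  · exact aux_second N M hN hM c
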